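/- Let β be a Pisot number and let c ≥ ⌊β⌋ be an integer. Let Z_{−β}(2c) = {(z_i)_{i≥0} ∈ {−2c, …, 2c}^ℕ : Σ_{i≥0} z_i(−β)^{−i} = 0}. Then the set of all partial-sum values { Σ_{i=0}^{n} z_i(−β)^{n−i} : n ∈ ℕ, (z_i)_{i≥0} ∈ Z_{−β}(2c) } is finite. -/

import Mathlib

/-- A Pisot number: an algebraic integer `β > 1` all of whose other complex conjugates
have modulus strictly less than `1`. -/
def IsPisot (β : ℝ) : Prop :=
  1 < β ∧ IsIntegral ℤ β ∧
    ∀ z : ℂ, Polynomial.aeval z (minpoly ℤ β) = 0 → z ≠ (β : ℂ) → ‖z‖ < 1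

/-- `z` is a sequence over `{-2c, …, 2c}` representing `0` in base `-β`. -/
def MemZset (β : ℝ) (c : ℤ) (z : ℕ → ℤ) : Prop :=
  (∀ i, -(2 * c) ≤ z i ∧ z i ≤ 2 * c) ∧ (∑' i : ℕ, (z i : ℝ) * ((-β)⁻¹) ^ i) = 0

private lemma real_partial_bound (β : ℝ) (hβ1 : 1 < β) (M : ℝ) (z : ℕ → ℤ)
    (hzb : ∀ i, |(z i : ℝ)| ≤ M)
    (hsum : (∑' i : ℕ, (z i : ℝ) * ((-β)⁻¹) ^ i) = 0) (n : ℕ) :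
    |∑ i ∈ Finset.range (n + 1), (z i : ℝ) * (-β) ^ (n - i)| ≤ M / (β - 1) := by
  have hβ0 : (0:ℝ) < β := lt_trans one_pos hβ1
  have hβne : β ≠ 0 := ne_of_gt hβ0
  have hinv1 : β⁻¹ < 1 := inv_lt_one_of_one_lt₀ hβ1
  have hinv0 : (0:ℝ) ≤ β⁻¹ := inv_nonneg.2 hβ0.le
  set f : ℕ → ℝ := fun i => (z i : ℝ) * ((-β)⁻¹) ^ i with hf_def
  have hnorm : ∀ i, ‖f i‖ ≤ M * (β⁻¹) ^ i := by
    intro i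
    have : ‖f i‖ = |(z i : ℝ)| * (β⁻¹) ^ i := by
      rw [hf_def]
      simp [Real.norm_eq_abs, abs_mul, abs_pow, abs_inv, abs_neg, abs_of_pos hβ0]
    rw [this]
    exact mul_le_mul_of_nonneg_right (hzb i) (pow_nonneg hinv0 i)
  have hgeom : Summable (fun i : ℕ => M * (β⁻¹) ^ i) :=
    (summable_geometric_of_lt_one hinv0 hinv1).mul_left M
  have hf : Summable f := Summable.of_norm_bounded hgeom hnorm
  have hsplit := Summable.sum_add_tsum_nat_add (f := f) (n + 1) hf
  rw [hsum] at hsplit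
  have htail : Summable (fun i => f (i + (n + 1))) := (summable_nat_add_iff (n+1)).2 hf
  have hS : ∑ i ∈ Finset.range (n + 1), (z i : ℝ) * (-β) ^ (n - i)
      = (-β) ^ n * ∑ i ∈ Finset.range (n + 1), f i := by
    rw [Finset.mul_sum]
    refine Finset.sum_congr rfl fun i hi => ?_
    have hin : i ≤ n := Nat.lt_succ_iff.1 (Finset.mem_range.1 hi)
    rw [hf_def]
    have : (-β) ^ (n - i) = (-β) ^ n * ((-β)⁻¹) ^ i := by
      rw [pow_sub₀ _ (neg_ne_zero.2 hβne) hin, inv_pow]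
    rw [this]; ring
  have hsum_eq : ∑ i ∈ Finset.range (n + 1), f i = -∑' i, f (i + (n + 1)) := by
    linarith [hsplit]
  rw [hS, hsum_eq]
  have hnormtail : ∀ i, ‖f (i + (n + 1))‖ ≤ (M * (β⁻¹) ^ (n + 1)) * (β⁻¹) ^ i := by
    intro i
    calc ‖f (i + (n + 1))‖ ≤ M * (β⁻¹) ^ (i + (n + 1)) := hnorm _
      _ = (M * (β⁻¹) ^ (n + 1)) * (β⁻¹) ^ i := by rw [pow_add]; ring
  have hgeom2 : Summable (fun i : ℕ => (M * (β⁻¹) ^ (n + 1)) * (β⁻¹) ^ i) :=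
    (summable_geometric_of_lt_one hinv0 hinv1).mul_left _
  have hns : Summable (fun i => ‖f (i + (n + 1))‖) := htail.norm
  have habs : |∑' i, f (i + (n + 1))| ≤ (M * (β⁻¹) ^ (n + 1)) * (1 - β⁻¹)⁻¹ := by
    calc |∑' i, f (i + (n + 1))| = ‖∑' i, f (i + (n + 1))‖ := (Real.norm_eq_abs _).symm
      _ ≤ ∑' i, ‖f (i + (n + 1))‖ := norm_tsum_le_tsum_norm hns
      _ ≤ ∑' i, (M * (β⁻¹) ^ (n + 1)) * (β⁻¹) ^ i :=
          Summable.tsum_le_tsum hnormtail hns hgeom2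
      _ = (M * (β⁻¹) ^ (n + 1)) * (1 - β⁻¹)⁻¹ := by
          rw [tsum_mul_left, tsum_geometric_of_lt_one hinv0 hinv1]
  calc |(-β) ^ n * -∑' i, f (i + (n + 1))|
      = β ^ n * |∑' i, f (i + (n + 1))| := by
        rw [abs_mul, abs_neg, abs_pow, abs_neg, abs_of_pos hβ0]
    _ ≤ β ^ n * ((M * (β⁻¹) ^ (n + 1)) * (1 - β⁻¹)⁻¹) := by
        exact mul_le_mul_of_nonneg_left habs (pow_nonneg hβ0.le n)
    _ = M / (β - 1) := by
        have h1 : β ^ n * β⁻¹ ^ n = 1 := by rw [← mul_pow, mul_inv_cancel₀ hβne, one_pow]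
        have h2 : 1 - β⁻¹ ≠ 0 := ne_of_gt (sub_pos.2 hinv1)
        have h3 : β - 1 ≠ 0 := sub_ne_zero.2 (ne_of_gt hβ1)
        have h4 : β ^ n * (M * β⁻¹ ^ (n + 1) * (1 - β⁻¹)⁻¹)
            = (β ^ n * β⁻¹ ^ n) * (M * (β⁻¹ * (1 - β⁻¹)⁻¹)) := by
          rw [pow_succ]; ring
        rw [h4, h1, one_mul]
        congr 1
        rw [← mul_inv]
        congr 1
        field_simp

private lemma complex_sum_bound (w : ℂ) (hw : ‖w‖ < 1) (M : ℝ)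
    (z : ℕ → ℤ) (hz : ∀ i, |(z i : ℝ)| ≤ M) (n : ℕ) :
    ‖∑ i ∈ Finset.range (n + 1), (z i : ℂ) * w ^ (n - i)‖ ≤ M * (1 - ‖w‖)⁻¹ := by
  have hw0 : 0 ≤ ‖w‖ := norm_nonneg w
  have hM : 0 ≤ M := le_trans (abs_nonneg _) (hz 0)
  calc ‖∑ i ∈ Finset.range (n + 1), (z i : ℂ) * w ^ (n - i)‖
      ≤ ∑ i ∈ Finset.range (n + 1), ‖(z i : ℂ) * w ^ (n - i)‖ := norm_sum_le _ _
    _ ≤ ∑ i ∈ Finset.range (n + 1), M * (‖w‖) ^ (n - i) := by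
        refine Finset.sum_le_sum fun i _ => ?_
        rw [norm_mul, norm_pow]
        have h1 : ‖(z i : ℂ)‖ = |(z i : ℝ)| := by
          rw [← Complex.ofReal_intCast, Complex.norm_real, Real.norm_eq_abs]
        rw [h1]
        exact mul_le_mul_of_nonneg_right (hz i) (pow_nonneg hw0 _)
    _ = ∑ k ∈ Finset.range (n + 1), M * (‖w‖) ^ k := by
        simpa using Finset.sum_range_reflect (fun k => M * (‖w‖) ^ k) (n + 1)
    _ ≤ M * (1 - ‖w‖)⁻¹ := by
        rw [← Finset.mul_sum]
        refine mul_le_mul_of_nonneg_left ?_ hM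
        calc ∑ k ∈ Finset.range (n + 1), (‖w‖) ^ k
            ≤ ∑' k : ℕ, (‖w‖) ^ k :=
              Summable.sum_le_tsum _ (fun k _ => pow_nonneg hw0 k)
                (summable_geometric_of_lt_one hw0 hw)
          _ = (1 - ‖w‖)⁻¹ := tsum_geometric_of_lt_one hw0 hw

/-- Let `β` be a Pisot number and `c ≥ ⌊β⌋` an integer. The set of all partial-sum values
`Σ_{i=0}^{n} z_i (-β)^{n-i}` over all `n` and all `z ∈ Z_{-β}(2c)` is finite. -/
theorem finitely_many_states_of_pisot (β : ℝ) (hβ : IsPisot β) (c : ℤ) (hc : ⌊β⌋ ≤ c) :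
    {x : ℝ | ∃ (n : ℕ) (z : ℕ → ℤ), MemZset β c z ∧
      x = ∑ i ∈ Finset.range (n + 1), (z i : ℝ) * (-β) ^ (n - i)}.Finite := by
  classical
  obtain ⟨hβ1, hβint, hconj⟩ := hβ
  have hβ0 : (0:ℝ) < β := lt_trans one_pos hβ1
  have hβQ : IsIntegral ℚ β := hβint.tower_top
  set K : IntermediateField ℚ ℝ := IntermediateField.adjoin ℚ {β} with hK
  haveI : FiniteDimensional ℚ K := IntermediateField.adjoin.finiteDimensional hβQ
  haveI : NumberField K := ⟨⟩
  set g : K := ⟨β, IntermediateField.mem_adjoin_simple_self ℚ β⟩ with hg_def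
  have hg : algebraMap K ℝ g = β := rfl
  have hinj : Function.Injective (algebraMap K ℝ) := (algebraMap K ℝ).injective
  have hgint : IsIntegral ℤ g := by
    have h := hβint
    rw [← hg] at h
    exact (isIntegral_algebraMap_iff hinj).1 h
  have haev : Polynomial.aeval g (minpoly ℤ β) = 0 := by
    apply hinj
    rw [map_zero, ← Polynomial.aeval_algebraMap_apply, hg, minpoly.aeval]
  have hφroot : ∀ φ : K →+* ℂ, Polynomial.aeval (φ g) (minpoly ℤ β) = 0 := by
    intro φ
    have h := Polynomial.aeval_algHom_apply φ.toIntAlgHom g (minpoly ℤ β)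
    rw [haev, map_zero] at h
    exact h
  haveI : Nonempty (K →+* ℂ) := ⟨Complex.ofRealHom.comp (algebraMap K ℝ)⟩
  have hne : (Finset.univ : Finset (K →+* ℂ)).Nonempty := Finset.univ_nonempty
  set B : ℝ := max ((2 * (c:ℝ)) / (β - 1))
    (Finset.univ.sup' hne fun φ : K →+* ℂ => (2 * (c:ℝ)) * (1 - ‖φ g‖)⁻¹) with hB
  apply Set.Finite.subset
    ((NumberField.Embeddings.finite_of_norm_le K ℂ B).image (fun y : K => (y : ℝ)))
  rintro x ⟨n, z, ⟨hzb, hzsum⟩, rfl⟩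
  have hzabs : ∀ i, |(z i : ℝ)| ≤ 2 * (c:ℝ) := by
    intro i
    rw [abs_le]
    constructor
    · exact_mod_cast (hzb i).1
    · exact_mod_cast (hzb i).2
  set y : K := ∑ i ∈ Finset.range (n + 1), (z i : K) * (-g) ^ (n - i) with hy
  refine ⟨y, ⟨?_, ?_⟩, ?_⟩
  · -- integrality
    have hmem : y ∈ integralClosure ℤ K := by
      apply Subalgebra.sum_mem
      intro i _
      refine Subalgebra.mul_mem _ ?_ (Subalgebra.pow_mem _ (Subalgebra.neg_mem _ hgint) _)
      exact Subalgebra.intCast_mem _ _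
    exact hmem
  · -- bound for each embedding
    intro φ
    have hroot := hφroot φ
    have hφy : φ y = ∑ i ∈ Finset.range (n + 1), (z i : ℂ) * (-(φ g)) ^ (n - i) := by
      rw [hy, map_sum]
      refine Finset.sum_congr rfl fun i _ => ?_
      rw [map_mul, map_pow, map_neg, map_intCast]
    by_cases hcase : φ g = (β : ℂ)
    · rw [hφy, hcase]
      have hcast : ∑ i ∈ Finset.range (n + 1), (z i : ℂ) * (-(β:ℂ)) ^ (n - i)
          = ((∑ i ∈ Finset.range (n + 1), (z i : ℝ) * (-β) ^ (n - i) : ℝ) : ℂ) := by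
        push_cast
        rfl
      rw [hcast, Complex.norm_real, Real.norm_eq_abs]
      exact le_trans (real_partial_bound β hβ1 _ z hzabs hzsum n) (le_max_left _ _)
    · have hlt : ‖φ g‖ < 1 := hconj _ hroot hcase
      have hltn : ‖-(φ g)‖ < 1 := by rwa [norm_neg]
      rw [hφy]
      refine le_trans (complex_sum_bound (-(φ g)) hltn _ z hzabs n) ?_
      rw [norm_neg]
      exact le_trans (Finset.le_sup' (fun φ : K →+* ℂ =>
        (2 * (c:ℝ)) * (1 - ‖φ g‖)⁻¹) (Finset.mem_univ φ)) (le_max_right _ _)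
  · -- coercion
    show ((y : ℝ)) = _
    rw [show ((y : ℝ)) = algebraMap K ℝ y from rfl, hy, map_sum]
    refine Finset.sum_congr rfl fun i _ => ?_
    rw [map_mul, map_pow, map_neg, map_intCast, hg]
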